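/- Let n ≥ 1 and 1 ≤ q ≤ n be integers and let G be a q-colorable simple graph on vertex set {1,…,n}. Let A be the n×n real symmetric matrix with A_{ii} = 0 for all i, A_{ij} = −1 if {i,j} is an edge of G, and A_{ij} = +1 if i ≠ j and {i,j} is not an edge of G. Then for every integer m ≥ 1, trace(A^{2m}) ≥ (n/q − 1)^{2m}. -/

import Mathlib

open Matrix Finset

private lemma stmt4_aux {n : ℕ} (A : Matrix (Fin n) (Fin n) ℝ) (hsym : Aᵀ = A)
    (v : Fin n → ℝ) (m : ℕ) :
    (dotProduct v (A *ᵥ v)) ^ (2 * m) * (dotProduct v v) ≤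
      (A ^ (2 * m)).trace * (dotProduct v v) ^ (2 * m + 1) := by
  classical
  set g : ℕ → ℝ := fun k => dotProduct v ((A ^ k) *ᵥ v) with hg
  have hsymk : ∀ k : ℕ, (A ^ k)ᵀ = A ^ k := by
    intro k; rw [Matrix.transpose_pow, hsym]
  have hsplit : ∀ a b : ℕ, g (a + b) = dotProduct ((A ^ a) *ᵥ v) ((A ^ b) *ᵥ v) := by
    intro a b
    have : (A ^ (a + b)) *ᵥ v = (A ^ a) *ᵥ ((A ^ b) *ᵥ v) := by
      rw [Matrix.mulVec_mulVec, ← pow_add]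
    show v ⬝ᵥ (A ^ (a + b)) *ᵥ v = _
    rw [this, dotProduct_mulVec, ← Matrix.mulVec_transpose, hsymk]
  have hsq : ∀ a b : ℕ, g (a + b) = ∑ i, ((A ^ a) *ᵥ v) i * ((A ^ b) *ᵥ v) i := by
    intro a b; rw [hsplit]; rfl
  have hnn : ∀ k : ℕ, 0 ≤ g (2 * k) := by
    intro k
    rw [two_mul, hsq]
    exact Finset.sum_nonneg fun i _ => mul_self_nonneg _
  have hCS : ∀ a b : ℕ, g (a + b) ^ 2 ≤ g (2 * a) * g (2 * b) := by
    intro a b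
    rw [hsq a b, two_mul, two_mul, hsq a a, hsq b b]
    have := Finset.sum_mul_sq_le_sq_mul_sq Finset.univ (fun i => ((A ^ a) *ᵥ v) i)
      (fun i => ((A ^ b) *ᵥ v) i)
    simpa [sq] using this
  have hstep : ∀ k : ℕ, g (2 * k) * g 2 ≤ g (2 * (k + 1)) * g 0 := by
    intro k
    induction k with
    | zero => simp [mul_comm]
    | succ k ih =>
      have hcs : g (2 * (k + 1)) ^ 2 ≤ g (2 * k) * g (2 * (k + 2)) := by
        have := hCS k (k + 2)
        have h1 : k + (k + 2) = 2 * (k + 1) := by ring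
        rwa [h1] at this
      rcases eq_or_lt_of_le (hnn (k + 1)) with h0 | hpos
      · rw [← h0]
        simp only [zero_mul]
        exact mul_nonneg (hnn (k + 2)) (by simpa using hnn 0)
      · have hk : 0 < g (2 * k) := by
          rcases eq_or_lt_of_le (hnn k) with h0 | h
          · exfalso
            rw [← h0, zero_mul] at hcs
            nlinarith
          · exact h
        have h2 : 0 ≤ g 2 := by simpa using hnn 1
        have h0' : 0 ≤ g 0 := by simpa using hnn 0
        nlinarith [mul_le_mul_of_nonneg_right ih (le_of_lt hpos),
          mul_le_mul_of_nonneg_right hcs h0', hnn (k + 2)]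
  have hpow : ∀ k : ℕ, g 2 ^ k * g 0 ≤ g (2 * k) * g 0 ^ k := by
    intro k
    induction k with
    | zero => simp
    | succ k ih =>
      have h2 : 0 ≤ g 2 := by simpa using hnn 1
      have h0' : 0 ≤ g 0 := by simpa using hnn 0
      calc g 2 ^ (k + 1) * g 0 = g 2 * (g 2 ^ k * g 0) := by ring
        _ ≤ g 2 * (g (2 * k) * g 0 ^ k) := by
            exact mul_le_mul_of_nonneg_left ih h2
        _ = (g (2 * k) * g 2) * g 0 ^ k := by ring
        _ ≤ (g (2 * (k + 1)) * g 0) * g 0 ^ k := by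
            exact mul_le_mul_of_nonneg_right (hstep k) (pow_nonneg h0' k)
        _ = g (2 * (k + 1)) * g 0 ^ (k + 1) := by ring
  -- trace bound
  have htr : g (2 * m) ≤ (A ^ (2 * m)).trace * g 0 := by
    have hB : (A ^ (2 * m)) = (A ^ m) * (A ^ m) := by rw [← pow_add, two_mul]
    have htrace : (A ^ (2 * m)).trace = ∑ i, ∑ j, (A ^ m) i j ^ 2 := by
      rw [hB]
      simp only [Matrix.trace, Matrix.diag, Matrix.mul_apply]
      refine Finset.sum_congr rfl fun i _ => Finset.sum_congr rfl fun j _ => ?_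
      have : (A ^ m) j i = (A ^ m) i j := by
        conv_lhs => rw [← hsymk m]
        rfl
      rw [this, sq]
    have hg0 : g 0 = ∑ j, v j ^ 2 := by
      rw [hg]; simp [dotProduct, sq]
    have hgm : g (2 * m) = ∑ i, (∑ j, (A ^ m) i j * v j) ^ 2 := by
      rw [two_mul, hsq]
      refine Finset.sum_congr rfl fun i _ => ?_
      rw [sq]
      rfl
    rw [htrace, hg0, hgm, Finset.sum_mul]
    refine Finset.sum_le_sum fun i _ => ?_
    exact Finset.sum_mul_sq_le_sq_mul_sq Finset.univ (fun j => (A ^ m) i j) v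
  -- combine
  have hg1 : dotProduct v (A *ᵥ v) = g 1 := by rw [hg]; simp
  have hg0v : dotProduct v v = g 0 := by rw [hg]; simp
  rw [hg1, hg0v]
  have h2 : 0 ≤ g 2 := by simpa using hnn 1
  have h0' : 0 ≤ g 0 := by simpa using hnn 0
  have hCS1 : g 1 ^ 2 ≤ g 0 * g 2 := by
    have := hCS 0 1
    simpa using this
  have step1 : g 1 ^ (2 * m) ≤ (g 0 * g 2) ^ m := by
    calc g 1 ^ (2 * m) = (g 1 ^ 2) ^ m := by rw [← pow_mul]
      _ ≤ (g 0 * g 2) ^ m := pow_le_pow_left₀ (sq_nonneg _) hCS1 m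
  calc g 1 ^ (2 * m) * g 0 ≤ (g 0 * g 2) ^ m * g 0 :=
        mul_le_mul_of_nonneg_right step1 h0'
    _ = (g 2 ^ m * g 0) * g 0 ^ m := by rw [mul_pow]; ring
    _ ≤ (g (2 * m) * g 0 ^ m) * g 0 ^ m :=
        mul_le_mul_of_nonneg_right (hpow m) (pow_nonneg h0' m)
    _ ≤ ((A ^ (2 * m)).trace * g 0 * g 0 ^ m) * g 0 ^ m :=
        mul_le_mul_of_nonneg_right (mul_le_mul_of_nonneg_right htr (pow_nonneg h0' m))
          (pow_nonneg h0' m)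
    _ = (A ^ (2 * m)).trace * g 0 ^ (2 * m + 1) := by ring

/-- Let `1 ≤ q ≤ n` and let `G` be a `q`-colorable simple graph on
`{1,…,n}`. Let `A` be the `±1` adjacency matrix of the complement of `G` with zero
diagonal (`A_{ii} = 0`, `A_{ij} = −1` if `{i,j} ∈ E(G)`, `A_{ij} = +1` otherwise).
Then for every integer `m ≥ 1`, `trace(A^{2m}) ≥ (n/q − 1)^{2m}`. -/
theorem stmt4 (n q : ℕ) (hn : 1 ≤ n) (hq1 : 1 ≤ q) (hqn : q ≤ n)
    (G : SimpleGraph (Fin n)) [DecidableRel G.Adj] (hcol : G.Colorable q)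
    (A : Matrix (Fin n) (Fin n) ℝ)
    (hA : ∀ i j, A i j = if i = j then 0 else if G.Adj i j then -1 else 1)
    (m : ℕ) (hm : 1 ≤ m) :
    ((n : ℝ) / (q : ℝ) - 1) ^ (2 * m) ≤ (A ^ (2 * m)).trace := by
  classical
  have hsym : Aᵀ = A := by
    ext i j
    rw [Matrix.transpose_apply, hA, hA]
    by_cases h : i = j
    · simp [h]
    · by_cases ha : G.Adj i j
      · simp [h, Ne.symm h, ha, ha.symm]
      · simp [h, Ne.symm h, ha, show ¬ G.Adj j i from fun hh => ha hh.symm]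
  -- coloring
  obtain ⟨c⟩ := hcol
  -- largest color class
  have hqpos : (0 : ℕ) < q := hq1
  have hne : (Finset.univ : Finset (Fin q)).Nonempty := by
    simpa [Finset.univ_nonempty_iff] using Fin.pos_iff_nonempty.mp hqpos
  obtain ⟨c0, -, hc0⟩ := Finset.exists_max_image Finset.univ
    (fun b => (Finset.univ.filter (fun i => c i = b)).card) hne
  set S : Finset (Fin n) := Finset.univ.filter (fun i => c i = c0) with hS
  set s : ℕ := S.card with hs
  have hcard : n ≤ q * s := by
    have hfib : (Finset.univ : Finset (Fin n)).card =
        ∑ b : Fin q, (Finset.univ.filter (fun i => c i = b)).card :=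
      Finset.card_eq_sum_card_fiberwise (fun x _ => Finset.mem_univ (c x))
    have : (Finset.univ : Finset (Fin n)).card ≤ ∑ _b : Fin q, s := by
      rw [hfib]
      exact Finset.sum_le_sum fun b _ => hc0 b (Finset.mem_univ b)
    simpa [Finset.card_univ, mul_comm] using this
  have hs1 : 1 ≤ s := by
    by_contra h
    have hs0 : s = 0 := by omega
    rw [hs0, mul_zero] at hcard
    omega
  -- indicator vector
  set v : Fin n → ℝ := fun i => if c i = c0 then 1 else 0 with hv
  have hvsum : ∀ f : Fin n → ℝ, (∑ i, v i * f i) = ∑ i ∈ S, f i := by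
    intro f
    rw [Finset.sum_filter]
    refine Finset.sum_congr rfl fun i _ => ?_
    by_cases h : c i = c0 <;> simp [hv, h]
  have hg0 : dotProduct v v = (s : ℝ) := by
    rw [dotProduct, hvsum]
    have : ∀ i ∈ S, v i = 1 := by
      intro i hi
      simp only [hS, Finset.mem_filter] at hi
      simp [hv, hi.2]
    rw [Finset.sum_congr rfl this]
    simp [hs]
  have hg1 : dotProduct v (A *ᵥ v) = (s : ℝ) * ((s : ℝ) - 1) := by
    rw [dotProduct, hvsum]
    have hrow : ∀ i ∈ S, (A *ᵥ v) i = (s : ℝ) - 1 := by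
      intro i hi
      simp only [hS, Finset.mem_filter] at hi
      have : (A *ᵥ v) i = ∑ j, v j * A i j := by
        simp [Matrix.mulVec, dotProduct, mul_comm]
      rw [this, hvsum]
      have hAij : ∀ j ∈ S, A i j = if j = i then 0 else 1 := by
        intro j hj
        simp only [hS, Finset.mem_filter] at hj
        rw [hA]
        by_cases h : i = j
        · simp [h]
        · have hnadj : ¬ G.Adj i j := by
            intro hadj
            exact (c.valid hadj) (hi.2.trans hj.2.symm)
          simp [h, hnadj, show j ≠ i from fun hh => h hh.symm]
      have hiS : i ∈ S := by simp [hS, hi.2]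
      rw [Finset.sum_congr rfl hAij, ← Finset.add_sum_erase S _ hiS, if_pos rfl, zero_add]
      have h1 : ∀ j ∈ S.erase i, (if j = i then (0:ℝ) else 1) = 1 := by
        intro j hj
        rw [if_neg (Finset.ne_of_mem_erase hj)]
      rw [Finset.sum_congr rfl h1, Finset.sum_const, Finset.card_erase_of_mem hiS]
      simp only [nsmul_eq_mul, mul_one]
      rw [Nat.cast_sub hs1]
      simp [hs]
    rw [Finset.sum_congr rfl hrow]
    simp [hs, mul_comm]
    ring
  -- apply aux
  have key := stmt4_aux A hsym v m
  rw [hg0, hg1] at key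
  have hspos : (0 : ℝ) < (s : ℝ) := by exact_mod_cast hs1
  have hqpos' : (0 : ℝ) < (q : ℝ) := by exact_mod_cast hq1
  have hsq : (n : ℝ) / (q : ℝ) ≤ (s : ℝ) := by
    rw [div_le_iff₀ hqpos']
    have : (n : ℝ) ≤ (q : ℝ) * (s : ℝ) := by exact_mod_cast hcard
    linarith
  have hbase : (0 : ℝ) ≤ (n : ℝ) / (q : ℝ) - 1 := by
    have : (1 : ℝ) ≤ (n : ℝ) / (q : ℝ) := by
      rw [le_div_iff₀ hqpos']
      have : (q : ℝ) ≤ (n : ℝ) := by exact_mod_cast hqn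
      linarith
    linarith
  have h1 : ((n : ℝ) / (q : ℝ) - 1) ^ (2 * m) ≤ ((s : ℝ) - 1) ^ (2 * m) :=
    pow_le_pow_left₀ hbase (by linarith) _
  have heq : ((s : ℝ) - 1) ^ (2 * m) * (s : ℝ) ^ (2 * m + 1) =
      ((s : ℝ) * ((s : ℝ) - 1)) ^ (2 * m) * (s : ℝ) := by
    rw [mul_pow, pow_succ]
    ring
  have h2 : ((s : ℝ) - 1) ^ (2 * m) ≤ (A ^ (2 * m)).trace := by
    have hpowpos : (0 : ℝ) < (s : ℝ) ^ (2 * m + 1) := pow_pos hspos _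
    refine le_of_mul_le_mul_right ?_ hpowpos
    rw [heq]
    exact key
  exact h1.trans h2
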